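/- The set { (e^{2πi·a/c}, c) ∈ C × C : a, c ∈ Z, gcd(a,c) = 1 } is Zariski-dense in A²_C: any polynomial P ∈ C[x,y] vanishing at (e^{2πi a/c}, c) for all coprime integer pairs (a,c) is the zero polynomial. -/

import Mathlib

open MvPolynomial Polynomial Complex

private lemma eval_aeval_pair (P : MvPolynomial (Fin 2) ℂ) (f : Fin 2 → Polynomial ℂ) (t : ℂ) :
    (MvPolynomial.aeval f P).eval t = MvPolynomial.eval (fun i => (f i).eval t) P := by
  rw [MvPolynomial.aeval_def, MvPolynomial.eval, ← Polynomial.coe_evalRingHom,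
    MvPolynomial.eval₂_comp_left (Polynomial.evalRingHom t)]
  congr 1
  ext x
  simp [Polynomial.algebraMap_eq]

private lemma natDegree_aeval_le' (P : MvPolynomial (Fin 2) ℂ) (s : ℂ) :
    (MvPolynomial.aeval ![Polynomial.X, Polynomial.C s] P).natDegree ≤ P.totalDegree := by
  rw [MvPolynomial.aeval_def, MvPolynomial.eval₂_eq]
  refine (Polynomial.natDegree_sum_le _ _).trans ?_
  rw [Finset.fold_max_le]
  refine ⟨Nat.zero_le _, fun d hd => ?_⟩
  refine (Polynomial.natDegree_mul_le).trans ?_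
  have h1 : (algebraMap ℂ (Polynomial ℂ) (MvPolynomial.coeff d P)).natDegree = 0 := by
    simp [Polynomial.algebraMap_eq]
  rw [h1, zero_add]
  have h3 : (∏ i ∈ d.support, ![Polynomial.X, Polynomial.C s] i ^ d i)
      = ∏ i : Fin 2, ![Polynomial.X, Polynomial.C s] i ^ d i := by
    rw [← Finsupp.prod_pow d]; rfl
  rw [h3, Fin.prod_univ_two]
  simp only [Matrix.cons_val_zero, Matrix.cons_val_one, Matrix.head_cons]
  refine (Polynomial.natDegree_mul_le).trans ?_
  have h2 : ((Polynomial.C s) ^ d 1).natDegree = 0 := by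
    simp [Polynomial.natDegree_pow]
  rw [h2, add_zero]
  calc (Polynomial.X ^ d 0 : Polynomial ℂ).natDegree ≤ d 0 := by
        simp [Polynomial.natDegree_X_pow]
    _ ≤ d 0 + d 1 := Nat.le_add_right _ _
    _ = d.sum (fun _ n => n) := by
        rw [Finsupp.sum_fintype _ _ (fun _ => rfl), Fin.sum_univ_two]
    _ ≤ P.totalDegree := MvPolynomial.le_totalDegree hd

theorem roots_of_unity_graph_zariski_dense (P : MvPolynomial (Fin 2) ℂ)
    (h : ∀ a c : ℤ, IsCoprime a c →
      MvPolynomial.eval ![Complex.exp (2 * Real.pi * Complex.I * a / c), (c : ℂ)] P = 0) :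
    P = 0 := by
  have h2pi : (2 * (Real.pi : ℂ) * Complex.I) ≠ 0 := by
    simp [Real.pi_ne_zero, Complex.I_ne_zero, Complex.ofReal_ne_zero]
  -- Step 1: for every prime p > totalDegree + 1, the polynomial P(X, p) is zero.
  have step1 : ∀ p : ℕ, p.Prime → P.totalDegree + 1 < p →
      MvPolynomial.aeval ![Polynomial.X, Polynomial.C (p : ℂ)] P = 0 := by
    intro p hp hlt
    set A := MvPolynomial.aeval ![Polynomial.X, Polynomial.C (p : ℂ)] P with hA
    have hp0 : (p : ℂ) ≠ 0 := Nat.cast_ne_zero.mpr hp.pos.ne'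
    -- injectivity of a ↦ exp(2πi a / p) on [1, p)
    have hinj : Function.Injective
        (fun a : {x // x ∈ Finset.Ico 1 p} =>
          Complex.exp (2 * Real.pi * Complex.I * (a : ℕ) / p)) := by
      rintro ⟨a, ha⟩ ⟨b, hb⟩ hab
      simp only [Finset.mem_Ico] at ha hb
      obtain ⟨n, hn⟩ := Complex.exp_eq_exp_iff_exists_int.mp hab
      field_simp at hn
      have hn' : (a : ℂ) = b + n * p := by
        refine mul_left_cancel₀ h2pi ?_
        linear_combination (2 * Real.pi * Complex.I) * hn
      have hz : (a : ℤ) = b + n * p := by exact_mod_cast hn'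
      have hnp : n * (p : ℤ) = (a : ℤ) - b := by linarith
      have hn0 : n = 0 := by
        rcases lt_trichotomy n 0 with hneg | h0 | hpos
        · nlinarith [hnp, (show ((a : ℤ)) - b > -p by omega), (show (1 : ℤ) ≤ -n by omega),
            (show (0 : ℤ) < p from mod_cast hp.pos)]
        · exact h0
        · nlinarith [hnp, (show ((a : ℤ)) - b < p by omega), (show (1 : ℤ) ≤ n by omega),
            (show (0 : ℤ) < p from mod_cast hp.pos)]
      subst hn0
      simp only [zero_mul, add_zero] at hz
      exact Subtype.ext (Nat.cast_inj.mp hz : a = b)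
    -- each exp(2πi a/p), 1 ≤ a < p, is a root of A
    have hroot : ∀ a : {x // x ∈ Finset.Ico 1 p},
        A.eval (Complex.exp (2 * Real.pi * Complex.I * (a : ℕ) / p)) = 0 := by
      rintro ⟨a, ha⟩
      simp only [Finset.mem_Ico] at ha
      have hcop : IsCoprime (a : ℤ) (p : ℤ) := by
        rw [Int.isCoprime_iff_gcd_eq_one, Int.gcd_natCast_natCast]
        exact (Nat.coprime_comm.mp
          ((hp.coprime_iff_not_dvd).mpr (Nat.not_dvd_of_pos_of_lt ha.1 ha.2)))
      have hh := h a p hcop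
      rw [hA, eval_aeval_pair]
      rw [show (fun i => (![Polynomial.X, Polynomial.C ((p : ℕ) : ℂ)] i).eval
          (Complex.exp (2 * Real.pi * Complex.I * (a : ℕ) / p)))
          = ![Complex.exp (2 * Real.pi * Complex.I * ((a : ℤ) : ℂ) / ((p : ℤ) : ℂ)),
              (((p : ℤ) : ℂ))] from ?_]
      · exact hh
      · funext i
        fin_cases i <;> simp
    haveI : Fintype {x // x ∈ Finset.Ico 1 p} := FinsetCoe.fintype _
    have hcard : A.natDegree < Fintype.card {x // x ∈ Finset.Ico 1 p} := by
      rw [Fintype.card_coe, Nat.card_Ico]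
      exact lt_of_le_of_lt (natDegree_aeval_le' P _) (by omega)
    exact Polynomial.eq_zero_of_natDegree_lt_card_of_eval_eq_zero A hinj hroot hcard
  -- Step 2: conclude by evaluating everywhere.
  apply MvPolynomial.funext
  intro x
  rw [map_zero]
  set B := MvPolynomial.aeval ![Polynomial.C (x 0), Polynomial.X] P with hB
  have hBzero : B = 0 := by
    apply Polynomial.eq_zero_of_infinite_isRoot
    have hSinf : {q : ℕ | q.Prime ∧ P.totalDegree + 1 < q}.Infinite := by
      have h1 : ({p : ℕ | p.Prime} \ Set.Iic (P.totalDegree + 1)).Infinite :=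
        Nat.infinite_setOf_prime.diff (Set.finite_Iic _)
      refine h1.mono ?_
      rintro q ⟨hq1, hq2⟩
      exact ⟨hq1, by simpa using hq2⟩
    have himg : ((fun q : ℕ => (q : ℂ)) ''
        {q : ℕ | q.Prime ∧ P.totalDegree + 1 < q}).Infinite :=
      hSinf.image ((Nat.cast_injective : Function.Injective (Nat.cast : ℕ → ℂ)).injOn)
    refine himg.mono ?_
    rintro _ ⟨q, ⟨hq, hqlt⟩, rfl⟩
    show B.IsRoot (q : ℂ)
    have hAq := step1 q hq hqlt
    have : (MvPolynomial.aeval ![Polynomial.X, Polynomial.C (q : ℂ)] P).eval (x 0) = 0 := by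
      rw [hAq, Polynomial.eval_zero]
    rw [eval_aeval_pair] at this
    rw [Polynomial.IsRoot, hB, eval_aeval_pair]
    have hfun : (fun i => (![Polynomial.C (x 0), Polynomial.X] i).eval ((q : ℕ) : ℂ))
        = (fun i => (![Polynomial.X, Polynomial.C ((q : ℕ) : ℂ)] i).eval (x 0)) := by
      funext i
      fin_cases i <;> simp
    rw [hfun]
    exact this
  have : B.eval (x 1) = MvPolynomial.eval x P := by
    rw [hB, eval_aeval_pair]
    have hfun : (fun i => (![Polynomial.C (x 0), Polynomial.X] i).eval (x 1)) = x := by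
      funext i
      fin_cases i <;> simp
    rw [hfun]
  rw [← this, hBzero, Polynomial.eval_zero]
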